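/- Let G be a group with normal subgroups L = N₁, M = N₂, N = N₃, and for nonempty A ⊆ {1,2,3} write N_A = ⋂_{i∈A} Nᵢ. Let T(L,M,N) be the group presented by generators a ⊗_{A,B} b, for all pairs (A,B) of nonempty disjoint subsets with A ∪ B = {1,2,3}, a ∈ N_A, b ∈ N_B, subject to the relations: (i) a ⊗_{A,B} b = (b ⊗_{B,A} a)⁻¹; (ii) aa' ⊗_{A,B} b = (ᵃa' ⊗_{A,B} ᵃb)(a ⊗_{A,B} b); (iii) (ᵘ[u⁻¹,v] ⊗_{U∪V,W} ᵘw)(ʷ[w⁻¹,u] ⊗_{W∪U,V} ʷv)(ᵛ[v⁻¹,w] ⊗_{V∪W,U} ᵛu) = 1 for all pairwise disjoint nonempty U,V,W with U∪V∪W = {1,2,3}, u ∈ N_U, v ∈ N_V, w ∈ N_W; (iv) (a ⊗_{A,B} b)(a' ⊗_{A',B'} b')(a ⊗_{A,B} b)⁻¹ = ^{[a,b]}a' ⊗_{A',B'} ^{[a,b]}b'. Then there is a well-defined group homomorphism ∂ : T(L,M,N) → G sending each generator a ⊗_{A,B} b to the commutator [a,b] = aba⁻¹b⁻¹; that is, the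 assignment a ⊗_{A,B} b ↦ [a,b] respects all the defining relations of T(L,M,N). -/

import Mathlib

open scoped commutatorElement

/-- The generating symbols `a ⊗_{A,B} b` of the group `T(L,M,N)` attached to a triple
`N₁, N₂, N₃` of normal subgroups of `G` (given as a function `N : Fin 3 → Subgroup G`):
a generator is a tuple `(A, B, a, b)` where `A, B` are nonempty disjoint subsets of
`{0,1,2}` with `A ∪ B = {0,1,2}`, `a ∈ N_A = ⋂_{i∈A} Nᵢ` and `b ∈ N_B = ⋂_{i∈B} Nᵢ`. -/
def TGen {G : Type*} [Group G] (N : Fin 3 → Subgroup G) : Type _ :=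
  { p : Set (Fin 3) × Set (Fin 3) × G × G //
      p.1.Nonempty ∧ p.2.1.Nonempty ∧ Disjoint p.1 p.2.1 ∧ p.1 ∪ p.2.1 = Set.univ ∧
      p.2.2.1 ∈ ⨅ i ∈ p.1, N i ∧ p.2.2.2 ∈ ⨅ i ∈ p.2.1, N i }

namespace TGen

variable {G : Type*} [Group G] {N : Fin 3 → Subgroup G}

/-- The first index set `A` of a generator `a ⊗_{A,B} b`. -/
def A (g : TGen N) : Set (Fin 3) := g.val.1

/-- The second index set `B` of a generator `a ⊗_{A,B} b`. -/
def B (g : TGen N) : Set (Fin 3) := g.val.2.1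

/-- The first entry `a` of a generator `a ⊗_{A,B} b`. -/
def a (g : TGen N) : G := g.val.2.2.1

/-- The second entry `b` of a generator `a ⊗_{A,B} b`. -/
def b (g : TGen N) : G := g.val.2.2.2

end TGen

/-- The defining relations of the group `T(L,M,N)`, as a subset of the free group on the
generating symbols (each relation `u = v` is recorded as the word `u * v⁻¹`):
(i)   `a ⊗_{A,B} b = (b ⊗_{B,A} a)⁻¹`;
(ii)  `aa' ⊗_{A,B} b = (ᵃa' ⊗_{A,B} ᵃb)(a ⊗_{A,B} b)`;
(iii) `(ᵘ[u⁻¹,v] ⊗_{U∪V,W} ᵘw)(ʷ[w⁻¹,u] ⊗_{W∪U,V} ʷv)(ᵛ[v⁻¹,w] ⊗_{V∪W,U} ᵛu) = 1`;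
(iv)  `(a ⊗_{A,B} b)(a' ⊗_{A',B'} b')(a ⊗_{A,B} b)⁻¹ = ^{[a,b]}a' ⊗_{A',B'} ^{[a,b]}b'`.
Here `[x,y] = xyx⁻¹y⁻¹` and `ˣy = xyx⁻¹`. -/
def TRels {G : Type*} [Group G] (N : Fin 3 → Subgroup G) : Set (FreeGroup (TGen N)) :=
  { r |
    (∃ g g' : TGen N, g'.val = (g.B, g.A, g.b, g.a) ∧
      r = FreeGroup.of g * FreeGroup.of g') ∨
    (∃ (g₁ g₂ g₃ : TGen N) (A B : Set (Fin 3)) (a a' b : G),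
      a' ∈ ⨅ i ∈ A, N i ∧
      g₁.val = (A, B, a * a', b) ∧
      g₂.val = (A, B, a * a' * a⁻¹, a * b * a⁻¹) ∧
      g₃.val = (A, B, a, b) ∧
      r = FreeGroup.of g₁ * (FreeGroup.of g₂ * FreeGroup.of g₃)⁻¹) ∨
    (∃ (g₁ g₂ g₃ : TGen N) (U V W : Set (Fin 3)) (u v w : G),
      U.Nonempty ∧ V.Nonempty ∧ W.Nonempty ∧
      Disjoint U V ∧ Disjoint V W ∧ Disjoint U W ∧ U ∪ V ∪ W = Set.univ ∧
      u ∈ ⨅ i ∈ U, N i ∧ v ∈ ⨅ i ∈ V, N i ∧ w ∈ ⨅ i ∈ W, N i ∧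
      g₁.val = (U ∪ V, W, u * ⁅u⁻¹, v⁆ * u⁻¹, u * w * u⁻¹) ∧
      g₂.val = (W ∪ U, V, w * ⁅w⁻¹, u⁆ * w⁻¹, w * v * w⁻¹) ∧
      g₃.val = (V ∪ W, U, v * ⁅v⁻¹, w⁆ * v⁻¹, v * u * v⁻¹) ∧
      r = FreeGroup.of g₁ * FreeGroup.of g₂ * FreeGroup.of g₃) ∨
    (∃ g g' g'' : TGen N,
      g''.val = (g'.A, g'.B, ⁅g.a, g.b⁆ * g'.a * ⁅g.a, g.b⁆⁻¹,
        ⁅g.a, g.b⁆ * g'.b * ⁅g.a, g.b⁆⁻¹) ∧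
      r = FreeGroup.of g * FreeGroup.of g' * (FreeGroup.of g)⁻¹ * (FreeGroup.of g'')⁻¹) }

/-- The group `T(L,M,N)` presented by the generators `a ⊗_{A,B} b` and the relations
(i)–(iv) above. -/
abbrev TGroup {G : Type*} [Group G] (N : Fin 3 → Subgroup G) : Type _ :=
  PresentedGroup (TRels N)

/-- for a group `G` with normal subgroups `L = N₁`, `M = N₂`, `N = N₃`,
the assignment `a ⊗_{A,B} b ↦ [a,b] = aba⁻¹b⁻¹` respects all defining relations of
`T(L,M,N)`, i.e. there is a well-defined group homomorphism `∂ : T(L,M,N) → G` sending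
each generator `a ⊗_{A,B} b` to the commutator `[a,b]`. -/
theorem exists_commutator_hom {G : Type*} [Group G] (L M N : Subgroup G)
    [L.Normal] [M.Normal] [N.Normal] :
    ∃ d : TGroup (![L, M, N]) →* G,
      ∀ g : TGen (![L, M, N]), d (PresentedGroup.of g) = ⁅g.a, g.b⁆ := by
  have h : ∀ r ∈ TRels (![L, M, N]),
      FreeGroup.lift (fun g : TGen (![L, M, N]) => ⁅g.a, g.b⁆) r = 1 := by
    rintro r (⟨g, g', h1, rfl⟩ | ⟨g₁, g₂, g₃, A, B, a, a', b, _, h1, h2, h3, rfl⟩ |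
      ⟨g₁, g₂, g₃, U, V, W, u, v, w, _, _, _, _, _, _, _, _, _, _, h1, h2, h3, rfl⟩ |
      ⟨g, g', g'', h1, rfl⟩)
    · simp only [map_mul, FreeGroup.lift_apply_of, TGen.a, TGen.b, h1]
      group
    · simp only [map_mul, map_inv, FreeGroup.lift_apply_of, TGen.a, TGen.b, h1, h2, h3]
      group
    · simp only [map_mul, FreeGroup.lift_apply_of, TGen.a, TGen.b, h1, h2, h3]
      group
    · simp only [map_mul, map_inv, FreeGroup.lift_apply_of, TGen.a, TGen.b, h1]
      group
  exact ⟨PresentedGroup.toGroup h, fun g => PresentedGroup.toGroup.of h⟩
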